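/- Let n ≥ 1, let H, A, B be Hermitian n×n complex matrices, let t₀ ≥ 0 be real, and suppose there is a unitary n×n complex matrix U such that U A U* = B and U (H + t₀•(A − B)) U* = H + t₀•(A − B). Then the real part of Tr(B · exp(−H)) is less than or equal to the real part of Tr(A · exp(−H)). -/

import Mathlib

open Matrix

lemma trace_conj_conj (n : ℕ) (P Q : Matrix (Fin n) (Fin n) ℂ) (a b : Fin n → ℝ) :
    ((P * diagonal (Complex.ofReal ∘ a) * Pᴴ) * (Q * diagonal (Complex.ofReal ∘ b) * Qᴴ)).trace
      = ∑ i, ∑ j, ((a i * b j * Complex.normSq ((Pᴴ * Q) i j) : ℝ) : ℂ) := by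
  have e1 : (P * diagonal (Complex.ofReal ∘ a) * Pᴴ) * (Q * diagonal (Complex.ofReal ∘ b) * Qᴴ)
      = P * (diagonal (Complex.ofReal ∘ a) * ((Pᴴ * Q) * (diagonal (Complex.ofReal ∘ b) * Qᴴ))) := by
    simp only [Matrix.mul_assoc]
  rw [e1, Matrix.trace_mul_comm]
  have e2 : diagonal (Complex.ofReal ∘ a) * (Pᴴ * Q * (diagonal (Complex.ofReal ∘ b) * Qᴴ)) * P
      = diagonal (Complex.ofReal ∘ a) * (Pᴴ * Q) * diagonal (Complex.ofReal ∘ b) * (Pᴴ * Q)ᴴ := by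
    rw [conjTranspose_mul, conjTranspose_conjTranspose]
    simp only [Matrix.mul_assoc]
  rw [e2]
  simp only [Matrix.trace, Matrix.diag]
  refine Finset.sum_congr rfl fun i _ => ?_
  rw [Matrix.mul_apply]
  refine Finset.sum_congr rfl fun j _ => ?_
  simp only [Matrix.mul_diagonal, Matrix.diagonal_mul, Matrix.conjTranspose_apply,
    Function.comp_apply, Complex.star_def]
  push_cast
  linear_combination (↑(a i) * ↑(b j) : ℂ) * Complex.mul_conj ((Pᴴ * Q) i j)

lemma exp_herm_rep (n : ℕ) (P : Matrix (Fin n) (Fin n) ℂ) (d : Fin n → ℝ)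
    (h1 : P * Pᴴ = 1) (h2 : Pᴴ * P = 1) :
    NormedSpace.exp (P * diagonal (Complex.ofReal ∘ d) * Pᴴ)
      = P * diagonal (Complex.ofReal ∘ (Real.exp ∘ d)) * Pᴴ := by
  have hPinv : P⁻¹ = Pᴴ := Matrix.inv_eq_right_inv h1
  have hunit : IsUnit P := ⟨⟨P, Pᴴ, h1, h2⟩, rfl⟩
  have hexp : NormedSpace.exp (Complex.ofReal ∘ d) = Complex.ofReal ∘ (Real.exp ∘ d) := by
    funext i
    rw [Pi.coe_exp]
    simp [← Complex.exp_eq_exp_ℂ, Complex.ofReal_exp, Function.comp]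
  rw [← hPinv, Matrix.exp_conj P _ hunit, Matrix.exp_diagonal, hexp, hPinv]

lemma herm_rep (n : ℕ) (X : Matrix (Fin n) (Fin n) ℂ) (hX : X.IsHermitian) :
    ∃ P : Matrix (Fin n) (Fin n) ℂ, ∃ d : Fin n → ℝ,
      P * Pᴴ = 1 ∧ Pᴴ * P = 1 ∧ X = P * diagonal (Complex.ofReal ∘ d) * Pᴴ ∧
      NormedSpace.exp X = P * diagonal (Complex.ofReal ∘ (Real.exp ∘ d)) * Pᴴ := by
  have h1 : (hX.eigenvectorUnitary : Matrix (Fin n) (Fin n) ℂ) * (hX.eigenvectorUnitary : Matrix (Fin n) (Fin n) ℂ)ᴴ = 1 := by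
    simpa [Matrix.star_eq_conjTranspose] using
      (Matrix.mem_unitaryGroup_iff.mp hX.eigenvectorUnitary.2)
  have h2 : (hX.eigenvectorUnitary : Matrix (Fin n) (Fin n) ℂ)ᴴ * (hX.eigenvectorUnitary : Matrix (Fin n) (Fin n) ℂ) = 1 := by
    simpa [Matrix.star_eq_conjTranspose] using
      (Matrix.mem_unitaryGroup_iff'.mp hX.eigenvectorUnitary.2)
  have hs : X = (hX.eigenvectorUnitary : Matrix (Fin n) (Fin n) ℂ)
      * diagonal (Complex.ofReal ∘ hX.eigenvalues) * (hX.eigenvectorUnitary : Matrix (Fin n) (Fin n) ℂ)ᴴ := by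
    simpa [Matrix.star_eq_conjTranspose] using hX.spectral_theorem
  refine ⟨_, hX.eigenvalues, h1, h2, hs, ?_⟩
  conv_lhs => rw [hs]
  exact exp_herm_rep n _ _ h1 h2

/-- key monotonicity: `Tr ((X - Y)(exp X - exp Y)) ≥ 0` for Hermitian `X`, `Y`. -/
lemma trace_mono_key (n : ℕ) (X Y : Matrix (Fin n) (Fin n) ℂ)
    (hX : X.IsHermitian) (hY : Y.IsHermitian) :
    0 ≤ (((X - Y) * (NormedSpace.exp X - NormedSpace.exp Y)).trace).re := by
  obtain ⟨P, d, hP1, hP2, hXr, hXe⟩ := herm_rep n X hX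
  obtain ⟨Q, e, hQ1, hQ2, hYr, hYe⟩ := herm_rep n Y hY
  set M : Matrix (Fin n) (Fin n) ℂ := Pᴴ * Q with hM
  have hMH : Qᴴ * P = Mᴴ := by rw [hM, conjTranspose_mul, conjTranspose_conjTranspose]
  have hMM : M * Mᴴ = 1 := by
    rw [hM, conjTranspose_mul, conjTranspose_conjTranspose]
    calc Pᴴ * Q * (Qᴴ * P) = Pᴴ * (Q * Qᴴ) * P := by simp only [Matrix.mul_assoc]
    _ = 1 := by rw [hQ1, Matrix.mul_one, hP2]
  have hMM' : Mᴴ * M = 1 := by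
    rw [hM, conjTranspose_mul, conjTranspose_conjTranspose]
    calc Qᴴ * P * (Pᴴ * Q) = Qᴴ * (P * Pᴴ) * Q := by simp only [Matrix.mul_assoc]
    _ = 1 := by rw [hP1, Matrix.mul_one, hQ2]
  have hrow : ∀ i, ∑ j, Complex.normSq (M i j) = 1 := by
    intro i
    have h : (M * Mᴴ) i i = (1 : Matrix (Fin n) (Fin n) ℂ) i i := by rw [hMM]
    rw [Matrix.mul_apply] at h
    simp only [Matrix.conjTranspose_apply, Complex.star_def, Complex.mul_conj,
      Matrix.one_apply_eq] at h
    exact_mod_cast h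
  have hcol : ∀ j, ∑ i, Complex.normSq (M i j) = 1 := by
    intro j
    have h : (Mᴴ * M) j j = (1 : Matrix (Fin n) (Fin n) ℂ) j j := by rw [hMM']
    rw [Matrix.mul_apply] at h
    simp only [Matrix.conjTranspose_apply, Complex.star_def, Matrix.one_apply_eq] at h
    have h' : ∑ i, ((Complex.normSq (M i j) : ℝ) : ℂ) = 1 := by
      rw [← h]
      refine Finset.sum_congr rfl fun i _ => ?_
      rw [mul_comm, Complex.mul_conj]
    exact_mod_cast h'
  have expand : ((X - Y) * (NormedSpace.exp X - NormedSpace.exp Y)).trace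
      = (X * NormedSpace.exp X).trace - (X * NormedSpace.exp Y).trace
        - ((Y * NormedSpace.exp X).trace - (Y * NormedSpace.exp Y).trace) := by
    rw [sub_mul, mul_sub, mul_sub, Matrix.trace_sub, Matrix.trace_sub, Matrix.trace_sub]
  have main : ((X - Y) * (NormedSpace.exp X - NormedSpace.exp Y)).trace
      = ((∑ i, ∑ j, Complex.normSq (M i j) * ((d i - e j) * (Real.exp (d i) - Real.exp (e j)))) : ℝ) := by
    rw [expand]
    conv_lhs => rw [hXe, hYe, hXr, hYr]
    rw [trace_conj_conj, trace_conj_conj, trace_conj_conj, trace_conj_conj]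
    simp only [← Complex.ofReal_sum, ← Complex.ofReal_sub]
    norm_cast
    simp only [Function.comp_apply, ← hM]
    rw [hP2, hQ2, hMH]
    have S1 : ∑ i, ∑ j, d i * Real.exp (d j) * Complex.normSq ((1 : Matrix (Fin n) (Fin n) ℂ) i j)
        = ∑ i, ∑ j, d i * Real.exp (d i) * Complex.normSq (M i j) := by
      refine Finset.sum_congr rfl fun i _ => ?_
      rw [show ∑ j, d i * Real.exp (d j) * Complex.normSq ((1 : Matrix (Fin n) (Fin n) ℂ) i j)
          = d i * Real.exp (d i) from ?_, ← Finset.mul_sum, hrow i, mul_one]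
      rw [Finset.sum_eq_single i]
      · simp
      · intro j _ hj; simp [Matrix.one_apply, (Ne.symm hj)]
      · simp
    have S4 : ∑ i, ∑ j, e i * Real.exp (e j) * Complex.normSq ((1 : Matrix (Fin n) (Fin n) ℂ) i j)
        = ∑ i, ∑ j, e j * Real.exp (e j) * Complex.normSq (M i j) := by
      rw [show ∑ i, ∑ j, e i * Real.exp (e j) * Complex.normSq ((1 : Matrix (Fin n) (Fin n) ℂ) i j)
          = ∑ j, e j * Real.exp (e j) from ?_, Finset.sum_comm]
      · refine Finset.sum_congr rfl fun j _ => ?_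
        rw [← Finset.mul_sum, hcol j, mul_one]
      · refine Finset.sum_congr rfl fun i _ => ?_
        rw [Finset.sum_eq_single i]
        · simp
        · intro j _ hj; simp [Matrix.one_apply, (Ne.symm hj)]
        · simp
    have S3 : ∑ i, ∑ j, e i * Real.exp (d j) * Complex.normSq (Mᴴ i j)
        = ∑ i, ∑ j, e j * Real.exp (d i) * Complex.normSq (M i j) := by
      rw [Finset.sum_comm]
      refine Finset.sum_congr rfl fun i _ => Finset.sum_congr rfl fun j _ => ?_
      rw [Matrix.conjTranspose_apply, Complex.star_def, Complex.normSq_conj]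
    rw [S1, S4, S3]
    simp only [← Finset.sum_sub_distrib]
    refine Finset.sum_congr rfl fun i _ => Finset.sum_congr rfl fun j _ => ?_
    ring
  rw [main, Complex.ofReal_re]
  refine Finset.sum_nonneg fun i _ => Finset.sum_nonneg fun j _ => ?_
  refine mul_nonneg (Complex.normSq_nonneg _) ?_
  rcases le_total (d i) (e j) with h | h
  · exact mul_nonneg_iff.mpr (Or.inr ⟨by linarith, by simp [Real.exp_le_exp, h]⟩)
  · exact mul_nonneg (by linarith) (by simp [Real.exp_le_exp, h])

/-- Finite-dimensional skeleton of the occupation-number monotonicity lemma: if `H`, `A`, `B`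
are Hermitian, `t₀ ≥ 0`, and there is a unitary `U` with `U A U* = B` which leaves
`H + t₀ • (A - B)` invariant, then `Re Tr (B * exp (-H)) ≤ Re Tr (A * exp (-H))`. -/
theorem re_trace_mul_exp_neg_le_of_symmetry
    (n : ℕ) (hn : 1 ≤ n) (H A B : Matrix (Fin n) (Fin n) ℂ)
    (hH : H.IsHermitian) (hA : A.IsHermitian) (hB : B.IsHermitian)
    (t₀ : ℝ) (ht₀ : 0 ≤ t₀)
    (hU : ∃ U : Matrix (Fin n) (Fin n) ℂ, U * Uᴴ = 1 ∧ Uᴴ * U = 1 ∧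
      U * A * Uᴴ = B ∧
      U * (H + (t₀ : ℂ) • (A - B)) * Uᴴ = H + (t₀ : ℂ) • (A - B)) :
    ((B * NormedSpace.exp (-H)).trace).re ≤ ((A * NormedSpace.exp (-H)).trace).re := by
  obtain ⟨U, hU1, hU2, hUAB, hUK⟩ := hU
  set C : Matrix (Fin n) (Fin n) ℂ := A - B with hC
  set K : Matrix (Fin n) (Fin n) ℂ := H + (t₀ : ℂ) • C with hK
  have hCherm : C.IsHermitian := hA.sub hB
  have hKherm : K.IsHermitian := by
    refine hH.add ?_
    unfold Matrix.IsHermitian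
    rw [conjTranspose_smul, hCherm.eq]
    congr 1
    simp [Complex.star_def, Complex.conj_ofReal]
  -- the exp of -K is invariant under conjugation by U
  have hUinv : U⁻¹ = Uᴴ := Matrix.inv_eq_right_inv hU1
  have hunit : IsUnit U := ⟨⟨U, Uᴴ, hU1, hU2⟩, rfl⟩
  have hnegK : U * (-K) * U⁻¹ = -K := by
    rw [hUinv]
    rw [Matrix.mul_neg, Matrix.neg_mul, hUK]
  have hE : U * NormedSpace.exp (-K) * Uᴴ = NormedSpace.exp (-K) := by
    rw [← hUinv, ← Matrix.exp_conj U (-K) hunit, hnegK]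
  -- trace of C * exp(-K) vanishes
  have htrBA : (B * NormedSpace.exp (-K)).trace = (A * NormedSpace.exp (-K)).trace := by
    calc (B * NormedSpace.exp (-K)).trace
        = ((U * A * Uᴴ) * (U * NormedSpace.exp (-K) * Uᴴ)).trace := by rw [hUAB, hE]
      _ = (U * ((A * NormedSpace.exp (-K)) * Uᴴ)).trace := by
          rw [show (U * A * Uᴴ) * (U * NormedSpace.exp (-K) * Uᴴ)
              = U * (A * ((Uᴴ * U) * (NormedSpace.exp (-K) * Uᴴ))) by
            simp only [Matrix.mul_assoc], hU2, Matrix.one_mul]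
          simp only [Matrix.mul_assoc]
      _ = ((A * NormedSpace.exp (-K)) * (Uᴴ * U)).trace := by
          rw [Matrix.trace_mul_comm, Matrix.mul_assoc]
      _ = (A * NormedSpace.exp (-K)).trace := by rw [hU2, Matrix.mul_one]
  have htr0 : (C * NormedSpace.exp (-K)).trace = 0 := by
    rw [hC, sub_mul, Matrix.trace_sub, htrBA, sub_self]
  -- key inequality
  have hXY : (-H) - (-K) = (t₀ : ℂ) • C := by rw [hK]; abel
  have hkey := trace_mono_key n (-H) (-K) hH.neg hKherm.neg
  rw [hXY] at hkey
  have hsm : (((t₀ : ℂ) • C) * (NormedSpace.exp (-H) - NormedSpace.exp (-K))).trace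
      = (t₀ : ℂ) * ((C * NormedSpace.exp (-H)).trace - (C * NormedSpace.exp (-K)).trace) := by
    rw [Matrix.smul_mul, Matrix.trace_smul, mul_sub, Matrix.trace_sub]
    simp [smul_eq_mul, mul_sub]
  rw [hsm, htr0, sub_zero] at hkey
  rw [Complex.re_ofReal_mul] at hkey
  -- conclude
  have hnn : 0 ≤ ((C * NormedSpace.exp (-H)).trace).re := by
    rcases eq_or_lt_of_le ht₀ with h0 | h0
    · have hKH : K = H := by rw [hK, ← h0]; simp
      have hz : (C * NormedSpace.exp (-H)).trace = 0 := by rw [← hKH]; exact htr0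
      rw [hz]; simp
    · nlinarith [hkey]
  have hsub : ((C * NormedSpace.exp (-H)).trace).re
      = ((A * NormedSpace.exp (-H)).trace).re - ((B * NormedSpace.exp (-H)).trace).re := by
    rw [hC, sub_mul, Matrix.trace_sub, Complex.sub_re]
  linarith [hsub ▸ hnn]
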